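/- arXiv:1403.4796 — 5 statements merged into one kernel-verified Lean document; each statement's English description precedes it below -/
import Mathlib

section
/- For d ≥ 1 and k ≥ 0, letting a = (k+1)(k+2), b = d(2k+3+d), c = d(2k+3-d) (as integers), the formal power series identity (1-z^d)^3 · ∑_{i≥0} C(k+id+2, 2) z^{k+id} · 2 = z^k · a + z^{k+d} · (b - 2a) + z^{k+2d} · (a - c) holds. -/
open PowerSeries

lemma aux_two_choose (m : ℕ) : 2 * ((m + 2).choose 2) = (m + 1) * (m + 2) := by
  rw [Nat.choose_two_right, show m + 2 - 1 = m + 1 by omega]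
  have h : 2 ∣ (m + 2) * (m + 1) := by
    have := Nat.even_mul_succ_self (m + 1)
    rw [mul_comm] at this
    simpa using this.two_dvd
  rw [Nat.mul_div_cancel' h, mul_comm]

lemma aux_two_choose' (m : ℕ) :
    (2 : ℤ) * ((m + 2).choose 2 : ℤ) = ((m : ℤ) + 1) * ((m : ℤ) + 2) := by
  exact_mod_cast aux_two_choose m

theorem stmt3 (d k : ℕ) (hd : 1 ≤ d) :
    (1 - X ^ d) ^ 3 *
        PowerSeries.mk (fun m => if k ≤ m ∧ d ∣ (m - k) then ((m + 2).choose 2 : ℤ) else 0) * 2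
      = X ^ k * C (((k : ℤ) + 1) * ((k : ℤ) + 2))
        + X ^ (k + d) *
            C ((d : ℤ) * (2 * k + 3 + d) - 2 * (((k : ℤ) + 1) * ((k : ℤ) + 2)))
        + X ^ (k + 2 * d) *
            C (((k : ℤ) + 1) * ((k : ℤ) + 2) - (d : ℤ) * (2 * k + 3 - d)) := by
  set F := PowerSeries.mk (fun m => if k ≤ m ∧ d ∣ (m - k) then ((m + 2).choose 2 : ℤ) else 0)
    with hF
  have expand : (1 - X ^ d) ^ 3 * F * 2
      = C 2 * F - C 6 * (X ^ d * F) + C 6 * (X ^ (2 * d) * F)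
        - C 2 * (X ^ (3 * d) * F) := by
    have h2 : (C 2) = (2 : ℤ⟦X⟧) := map_ofNat _ 2
    have h6 : (C 6) = (6 : ℤ⟦X⟧) := map_ofNat _ 6
    rw [h2, h6]; ring
  rw [expand, mul_comm (X ^ k) _, mul_comm (X ^ (k + d)) _, mul_comm (X ^ (k + 2 * d)) _]
  ext n
  simp only [map_sub, map_add, coeff_C_mul, coeff_X_pow_mul', hF, coeff_mk, coeff_C_mul_X_pow,
    mul_ite, mul_zero, coeff_X_pow, sub_mul, mul_one]
  by_cases hmain : k ≤ n ∧ d ∣ (n - k)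
  · obtain ⟨hkn, t, ht⟩ := hmain
    match t with
    | 0 =>
      have hn : k = n := by omega
      subst hn
      rw [if_pos (⟨le_rfl, ⟨0, by omega⟩⟩ : k ≤ k ∧ d ∣ k - k)]
      have z1 : (if d ≤ k then
          if k ≤ k - d ∧ d ∣ k - d - k then 6 * ((k - d + 2).choose 2 : ℤ) else 0 else 0) = 0 := by
        split_ifs with h1 h2
        · exact absurd h2.1 (by omega)
        · rfl
        · rfl
      have z2 : (if 2 * d ≤ k then
          if k ≤ k - 2 * d ∧ d ∣ k - 2 * d - k then 6 * ((k - 2 * d + 2).choose 2 : ℤ) else 0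
          else 0) = 0 := by
        split_ifs with h1 h2
        · exact absurd h2.1 (by omega)
        · rfl
        · rfl
      have z3 : (if 3 * d ≤ k then
          if k ≤ k - 3 * d ∧ d ∣ k - 3 * d - k then 2 * ((k - 3 * d + 2).choose 2 : ℤ) else 0
          else 0) = 0 := by
        split_ifs with h1 h2
        · exact absurd h2.1 (by omega)
        · rfl
        · rfl
      rw [z1, z2, z3, if_pos rfl, if_neg (show ¬ k = k + d by omega),
        if_neg (show ¬ k = k + d by omega), if_neg (show ¬ k = k + 2 * d by omega),
        if_neg (show ¬ k = k + 2 * d by omega)]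
      linear_combination aux_two_choose' k
    | 1 =>
      have hn : n = k + d := by omega
      subst hn
      rw [if_pos (⟨by omega, ⟨1, by omega⟩⟩ : k ≤ k + d ∧ d ∣ k + d - k)]
      rw [if_pos (show d ≤ k + d by omega),
        if_pos (⟨by omega, ⟨0, by omega⟩⟩ : k ≤ k + d - d ∧ d ∣ k + d - d - k)]
      have z2 : (if 2 * d ≤ k + d then
          if k ≤ k + d - 2 * d ∧ d ∣ k + d - 2 * d - k then
            6 * ((k + d - 2 * d + 2).choose 2 : ℤ) else 0 else 0) = 0 := by
        split_ifs with h1 h2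
        · exact absurd h2.1 (by omega)
        · rfl
        · rfl
      have z3 : (if 3 * d ≤ k + d then
          if k ≤ k + d - 3 * d ∧ d ∣ k + d - 3 * d - k then
            2 * ((k + d - 3 * d + 2).choose 2 : ℤ) else 0 else 0) = 0 := by
        split_ifs with h1 h2
        · exact absurd h2.1 (by omega)
        · rfl
        · rfl
      rw [z2, z3, if_neg (show ¬ k + d = k by omega), if_pos rfl, if_pos rfl,
        if_neg (show ¬ k + d = k + 2 * d by omega), if_neg (show ¬ k + d = k + 2 * d by omega)]
      rw [show k + d - d = k by omega]
      have b1 := congrArg (Nat.cast (R := ℤ)) (aux_two_choose (k + d))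
      have b0 := congrArg (Nat.cast (R := ℤ)) (aux_two_choose k)
      push_cast at b1 b0
      linear_combination b1 - 3 * b0
    | 2 =>
      have hn : n = k + 2 * d := by omega
      subst hn
      rw [if_pos (⟨by omega, ⟨2, by omega⟩⟩ : k ≤ k + 2 * d ∧ d ∣ k + 2 * d - k)]
      rw [if_pos (show d ≤ k + 2 * d by omega),
        if_pos (⟨by omega, ⟨1, by omega⟩⟩ : k ≤ k + 2 * d - d ∧ d ∣ k + 2 * d - d - k)]
      rw [if_pos (show 2 * d ≤ k + 2 * d by omega),
        if_pos (⟨by omega, ⟨0, by omega⟩⟩ : k ≤ k + 2 * d - 2 * d ∧ d ∣ k + 2 * d - 2 * d - k)]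
      have z3 : (if 3 * d ≤ k + 2 * d then
          if k ≤ k + 2 * d - 3 * d ∧ d ∣ k + 2 * d - 3 * d - k then
            2 * ((k + 2 * d - 3 * d + 2).choose 2 : ℤ) else 0 else 0) = 0 := by
        split_ifs with h1 h2
        · exact absurd h2.1 (by omega)
        · rfl
        · rfl
      rw [z3, if_neg (show ¬ k + 2 * d = k by omega),
        if_neg (show ¬ k + 2 * d = k + d by omega), if_neg (show ¬ k + 2 * d = k + d by omega),
        if_pos rfl, if_pos rfl]
      rw [show k + 2 * d - d = k + d by omega, show k + 2 * d - 2 * d = k by omega]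
      have b2 := congrArg (Nat.cast (R := ℤ)) (aux_two_choose (k + 2 * d))
      have b1 := congrArg (Nat.cast (R := ℤ)) (aux_two_choose (k + d))
      have b0 := congrArg (Nat.cast (R := ℤ)) (aux_two_choose k)
      push_cast at b2 b1 b0
      linear_combination b2 - 3 * b1 + 3 * b0
    | (m + 3) =>
      have E3 : d * (m + 3) = d * m + 3 * d := by ring
      have E2 : d * (m + 2) = d * m + 2 * d := by ring
      have E1 : d * (m + 1) = d * m + d := by ring
      have hQ : n = k + d * m + 3 * d := by omega
      subst hQ
      rw [if_pos (⟨by omega, ⟨m + 3, by omega⟩⟩ :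
        k ≤ k + d * m + 3 * d ∧ d ∣ k + d * m + 3 * d - k)]
      rw [if_pos (show d ≤ k + d * m + 3 * d by omega),
        if_pos (⟨by omega, ⟨m + 2, by omega⟩⟩ :
          k ≤ k + d * m + 3 * d - d ∧ d ∣ k + d * m + 3 * d - d - k)]
      rw [if_pos (show 2 * d ≤ k + d * m + 3 * d by omega),
        if_pos (⟨by omega, ⟨m + 1, by omega⟩⟩ :
          k ≤ k + d * m + 3 * d - 2 * d ∧ d ∣ k + d * m + 3 * d - 2 * d - k)]
      rw [if_pos (show 3 * d ≤ k + d * m + 3 * d by omega),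
        if_pos (⟨by omega, ⟨m, by omega⟩⟩ :
          k ≤ k + d * m + 3 * d - 3 * d ∧ d ∣ k + d * m + 3 * d - 3 * d - k)]
      rw [if_neg (show ¬ k + d * m + 3 * d = k by omega),
        if_neg (show ¬ k + d * m + 3 * d = k + d by omega),
        if_neg (show ¬ k + d * m + 3 * d = k + d by omega),
        if_neg (show ¬ k + d * m + 3 * d = k + 2 * d by omega),
        if_neg (show ¬ k + d * m + 3 * d = k + 2 * d by omega)]
      rw [show k + d * m + 3 * d - d = k + d * m + 2 * d by omega,
        show k + d * m + 3 * d - 2 * d = k + d * m + d by omega,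
        show k + d * m + 3 * d - 3 * d = k + d * m by omega]
      have b3 := congrArg (Nat.cast (R := ℤ)) (aux_two_choose (k + d * m + 3 * d))
      have b2 := congrArg (Nat.cast (R := ℤ)) (aux_two_choose (k + d * m + 2 * d))
      have b1 := congrArg (Nat.cast (R := ℤ)) (aux_two_choose (k + d * m + d))
      have b0 := congrArg (Nat.cast (R := ℤ)) (aux_two_choose (k + d * m))
      push_cast at b3 b2 b1 b0
      linear_combination b3 - 3 * b2 + 3 * b1 - b0
  · rw [if_neg hmain]
    have z1 : (if d ≤ n then
        if k ≤ n - d ∧ d ∣ n - d - k then 6 * ((n - d + 2).choose 2 : ℤ) else 0 else 0) = 0 := by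
      split_ifs with h1 h2
      · exfalso
        obtain ⟨c, hc⟩ := h2.2
        have h2' := h2.1
        have E : d * (c + 1) = d * c + d := by ring
        exact hmain ⟨by omega, ⟨c + 1, by omega⟩⟩
      · rfl
      · rfl
    have z2 : (if 2 * d ≤ n then
        if k ≤ n - 2 * d ∧ d ∣ n - 2 * d - k then 6 * ((n - 2 * d + 2).choose 2 : ℤ) else 0
        else 0) = 0 := by
      split_ifs with h1 h2
      · exfalso
        obtain ⟨c, hc⟩ := h2.2
        have h2' := h2.1
        have E : d * (c + 2) = d * c + 2 * d := by ring
        exact hmain ⟨by omega, ⟨c + 2, by omega⟩⟩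
      · rfl
      · rfl
    have z3 : (if 3 * d ≤ n then
        if k ≤ n - 3 * d ∧ d ∣ n - 3 * d - k then 2 * ((n - 3 * d + 2).choose 2 : ℤ) else 0
        else 0) = 0 := by
      split_ifs with h1 h2
      · exfalso
        obtain ⟨c, hc⟩ := h2.2
        have h2' := h2.1
        have E : d * (c + 3) = d * c + 3 * d := by ring
        exact hmain ⟨by omega, ⟨c + 3, by omega⟩⟩
      · rfl
      · rfl
    have r0 : ¬ n = k := fun h => hmain ⟨le_of_eq h.symm, by simp [h]⟩
    have r1 : ¬ n = k + d := fun h => hmain ⟨by omega, ⟨1, by omega⟩⟩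
    have r2 : ¬ n = k + 2 * d := fun h => hmain ⟨by omega, ⟨2, by omega⟩⟩
    rw [z1, z2, z3, if_neg r0, if_neg r1, if_neg r1, if_neg r2, if_neg r2]
    ring
end

section
/- For n ≥ 1, d ≥ 1, k ≥ 0, the formal power series identity: (n-1)! · ∑_{i≥0} C(k+id+n-1, n-1) z^{k+id} equals the (n-1)-st derivative of z^{k+n-1}/(1-z^d), i.e., (n-1)! · HS(S_{n,d,k}; z) = d^{n-1}/dz^{n-1} [ z^{k+n-1} · ∑_{j≥0} z^{jd} ]. -/
open PowerSeries

lemma coeff_iter_derivative (j : ℕ) (f : PowerSeries ℚ) (m : ℕ) :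
    PowerSeries.coeff (R := ℚ) m ((⇑(d⁄dX ℚ))^[j] f)
      = ((m + 1).ascFactorial j : ℚ) * PowerSeries.coeff (R := ℚ) (m + j) f := by
  induction j generalizing f with
  | zero => simp
  | succ j ih =>
      rw [Function.iterate_succ_apply, ih, PowerSeries.coeff_derivative,
        Nat.ascFactorial_succ]
      push_cast
      ring_nf

/-- Hilbert series of the Veronese module `S_{n,d,k}`:
`∑_{i≥0} C(k+id+n-1, n-1) z^{k+id}`. -/
noncomputable def veroneseHS (n d k : ℕ) : PowerSeries ℚ :=
  PowerSeries.mk fun m => if k ≤ m ∧ d ∣ (m - k) then ((m + n - 1).choose (n - 1) : ℚ) else 0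

theorem stmt5 (n d k : ℕ) (hn : 1 ≤ n) (hd : 1 ≤ d) :
    ((n - 1).factorial : ℚ) • veroneseHS n d k
      = (⇑(d⁄dX ℚ))^[n - 1]
          (X ^ (k + n - 1) * PowerSeries.mk fun m => if d ∣ m then (1 : ℚ) else 0) := by
  obtain ⟨N, rfl⟩ : ∃ N, n = N + 1 := ⟨n - 1, (Nat.succ_pred_eq_of_pos hn).symm⟩
  simp only [Nat.add_sub_cancel]
  ext m
  rw [coeff_iter_derivative, PowerSeries.coeff_X_pow_mul']
  have hmn : m + (N + 1) - 1 = m + N := by omega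
  have hkn : k + (N + 1) - 1 = k + N := by omega
  have hN : N + 1 - 1 = N := by omega
  simp only [PowerSeries.coeff_smul, veroneseHS, PowerSeries.coeff_mk, smul_eq_mul, hmn, hkn, hN]
  by_cases hk : k ≤ m
  · have h1 : k + N ≤ m + N := by omega
    have h2 : m + N - (k + N) = m - k := by omega
    rw [if_pos h1, h2]
    by_cases hdd : d ∣ (m - k)
    · rw [if_pos ⟨hk, hdd⟩, if_pos hdd, mul_one]
      rw [Nat.ascFactorial_eq_factorial_mul_choose]
      push_cast
      ring
    · rw [if_neg (fun h => hdd h.2), if_neg hdd]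
      simp
  · rw [if_neg (fun h => hk h.1), if_neg (by omega), mul_zero, mul_zero]
end

section
/- Let n ≥ 1, d ≥ 1, and let A = {a ∈ ℕ^n : a_1+...+a_n = d}. For c ∈ ℤ^n, define the pile simplicial complex Γ_c = {F ⊆ A : ∑_{a∈F} a ≤ c componentwise}. If k ≥ 1, i ≥ 2, and c ∈ ℕ^n with |c| = k + i·d, then any two elements v, w of A with v, w ≤ c (i.e., any two vertices of Γ_c) are connected in the 1-skeleton of Γ_c: there is a sequence of vertices from v to w such that consecutive vertices form an edge of Γ_c (their sum is ≤ c componentwise). -/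
open Finset

lemma exists_le_sum' {n : ℕ} (m : ℕ) : ∀ (t : Fin n → ℕ), m ≤ ∑ j, t j →
    ∃ u : Fin n → ℕ, (∀ j, u j ≤ t j) ∧ ∑ j, u j = m := by
  induction m with
  | zero => exact fun t _ => ⟨0, fun j => Nat.zero_le _, by simp⟩
  | succ m ih =>
    intro t ht
    have hex : ∃ l, 0 < t l := by
      by_contra h
      push_neg at h
      have h0 : ∑ j, t j = 0 := Finset.sum_eq_zero fun j _ => Nat.le_zero.mp (h j)
      omega
    obtain ⟨l, hl⟩ := hex
    set t' := Function.update t l (t l - 1) with ht'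
    have hsum' : ∑ j, t' j + 1 = ∑ j, t j := by
      rw [ht', Finset.sum_update_of_mem (Finset.mem_univ l),
        Finset.sum_eq_sum_sdiff_singleton_add (Finset.mem_univ l) t]
      omega
    obtain ⟨u', hu', hus'⟩ := ih t' (by omega)
    refine ⟨Function.update u' l (u' l + 1), ?_, ?_⟩
    · intro j
      by_cases hj : j = l
      · subst hj
        have := hu' j
        simp only [ht', Function.update_self] at this ⊢
        omega
      · simp only [Function.update_of_ne hj]
        have := hu' j
        simp only [ht', Function.update_of_ne hj] at this
        exact this
    · rw [Finset.sum_update_of_mem (Finset.mem_univ l),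
        Finset.sum_eq_sum_sdiff_singleton_add (Finset.mem_univ l) u'] at *
      omega

lemma sum_split_two {n : ℕ} {l j : Fin n} (h : j ≠ l) (f : Fin n → ℕ) :
    ∑ x, f x = f l + f j + ∑ x ∈ (Finset.univ \ {l}) \ {j}, f x := by
  rw [Finset.sum_eq_sum_sdiff_singleton_add (Finset.mem_univ l) f,
    Finset.sum_eq_sum_sdiff_singleton_add
      (show j ∈ Finset.univ \ {l} by simp [h]) f]
  ring

theorem stmt8 (n d k i : ℕ) (hn : 1 ≤ n) (hd : 1 ≤ d) (hk : 1 ≤ k) (hi : 2 ≤ i)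
    (c : Fin n → ℕ) (hc : ∑ j, c j = k + i * d)
    (v w : Fin n → ℕ) (hv : ∑ j, v j = d) (hw : ∑ j, w j = d)
    (hvc : ∀ j, v j ≤ c j) (hwc : ∀ j, w j ≤ c j) :
    Relation.ReflTransGen
      (fun a b : Fin n → ℕ =>
        (∑ j, a j = d) ∧ (∑ j, b j = d) ∧ ∀ j, a j + b j ≤ c j) v w := by
  suffices H : ∀ N (v : Fin n → ℕ), (∑ j, v j = d) → (∀ j, v j ≤ c j) →
      (∑ j, (w j - v j)) ≤ N →
      Relation.ReflTransGen
        (fun a b : Fin n → ℕ =>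
          (∑ j, a j = d) ∧ (∑ j, b j = d) ∧ ∀ j, a j + b j ≤ c j) v w by
    exact H _ v hv hvc le_rfl
  intro N
  induction N with
  | zero =>
    intro v hv hvc hδ
    have h0 : ∀ j, w j - v j = 0 := by
      intro j
      have := Finset.sum_eq_zero_iff.mp (Nat.le_zero.mp hδ) j (Finset.mem_univ j)
      exact this
    have hvw : v = w := by
      funext j
      by_contra hne
      have hwj : w j ≤ v j := by have := h0 j; omega
      have hlt : w j < v j := lt_of_le_of_ne hwj (fun h => hne h.symm)
      have hsum : ∑ x, w x < ∑ x, v x :=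
        Finset.sum_lt_sum (fun x _ => by have := h0 x; omega) ⟨j, Finset.mem_univ j, hlt⟩
      omega
    rw [hvw]
  | succ N ih =>
    intro v hv hvc hδ
    by_cases hvw : v = w
    · rw [hvw]
    have hl : ∃ l, v l < w l := by
      by_contra h
      push_neg at h
      apply hvw
      funext j
      by_contra hne
      have hlt : w j < v j := lt_of_le_of_ne (h j) (fun hh => hne hh.symm)
      have hsum : ∑ x, w x < ∑ x, v x :=
        Finset.sum_lt_sum (fun x _ => h x) ⟨j, Finset.mem_univ j, hlt⟩
      omega
    obtain ⟨l, hlt⟩ := hl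
    have hj : ∃ j, w j < v j := by
      by_contra h
      push_neg at h
      have hsum : ∑ x, v x < ∑ x, w x :=
        Finset.sum_lt_sum (fun x _ => h x) ⟨l, Finset.mem_univ l, hlt⟩
      omega
    obtain ⟨j, hjlt⟩ := hj
    have hjl : j ≠ l := fun h => by subst h; omega
    have hvj : 1 ≤ v j := by omega
    set v' := Function.update (Function.update v j (v j - 1)) l (v l + 1) with hv'def
    have hv'l : v' l = v l + 1 := by simp [hv'def]
    have hv'j : v' j = v j - 1 := by
      simp [hv'def, Function.update_of_ne hjl]
    have hv'o : ∀ m, m ≠ l → m ≠ j → v' m = v m := by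
      intro m hml hmj
      simp [hv'def, Function.update_of_ne hml, Function.update_of_ne hmj]
    have hrest : ∑ x ∈ (Finset.univ \ {l}) \ {j}, v' x
        = ∑ x ∈ (Finset.univ \ {l}) \ {j}, v x := by
      refine Finset.sum_congr rfl fun x hx => ?_
      simp only [Finset.mem_sdiff, Finset.mem_singleton] at hx
      exact hv'o x hx.1.2 hx.2
    have hsv' : ∑ x, v' x = d := by
      rw [sum_split_two hjl v', hrest, hv'l, hv'j]
      rw [sum_split_two hjl v] at hv
      omega
    have hwl : w l ≤ c l := hwc l
    have hv'c : ∀ m, v' m ≤ c m := by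
      intro m
      by_cases hml : m = l
      · subst hml; rw [hv'l]; omega
      by_cases hmj : m = j
      · subst hmj; rw [hv'j]; have := hvc m; omega
      · rw [hv'o m hml hmj]; exact hvc m
    -- distance decreases
    have hδ' : ∑ x, (w x - v' x) ≤ N := by
      have hrestδ : ∑ x ∈ (Finset.univ \ {l}) \ {j}, (w x - v' x)
          = ∑ x ∈ (Finset.univ \ {l}) \ {j}, (w x - v x) := by
        refine Finset.sum_congr rfl fun x hx => ?_
        simp only [Finset.mem_sdiff, Finset.mem_singleton] at hx
        rw [hv'o x hx.1.2 hx.2]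
      rw [sum_split_two hjl (fun x => w x - v' x)] at *
      rw [sum_split_two hjl (fun x => w x - v x)] at hδ
      rw [hrestδ, hv'l, hv'j]
      omega
    -- construct intermediate vertex u
    set t : Fin n → ℕ := fun m => c m - v m - (if m = l then 1 else 0) with htdef
    have hts : ∑ m, (t m + v m + (if m = l then 1 else 0)) = ∑ m, c m := by
      refine Finset.sum_congr rfl fun m _ => ?_
      by_cases hm : m = l
      · subst hm; simp only [htdef, eq_self_iff_true, if_true]; omega
      · simp only [htdef, if_neg hm]; have := hvc m; omega
    have htsum : d ≤ ∑ m, t m := by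
      rw [Finset.sum_add_distrib, Finset.sum_add_distrib] at hts
      have hind : ∑ m : Fin n, (if m = l then 1 else 0) = 1 := by
        simp
      rw [hv, hind, hc] at hts
      nlinarith
    obtain ⟨u, hu, hus⟩ := exists_le_sum' d t htsum
    have hut : ∀ m, u m + v m + (if m = l then 1 else 0) ≤ c m := by
      intro m
      have h1 := hu m
      by_cases hm : m = l
      · subst hm; simp only [htdef, eq_self_iff_true, if_true] at h1 ⊢
        have := hvc m; omega
      · simp only [htdef, if_neg hm] at h1 ⊢
        have := hvc m; omega
    have e1 : (∑ x, v x = d) ∧ (∑ x, u x = d) ∧ ∀ m, v m + u m ≤ c m := by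
      refine ⟨hv, hus, fun m => ?_⟩
      have := hut m
      by_cases hm : m = l
      · rw [hm] at this ⊢; simp only [eq_self_iff_true, if_true] at this; omega
      · rw [if_neg hm] at this; omega
    have e2 : (∑ x, u x = d) ∧ (∑ x, v' x = d) ∧ ∀ m, u m + v' m ≤ c m := by
      refine ⟨hus, hsv', fun m => ?_⟩
      have := hut m
      by_cases hml : m = l
      · rw [hml] at this ⊢; rw [hv'l]
        simp only [eq_self_iff_true, if_true] at this; omega
      rw [if_neg hml] at this
      by_cases hmj : m = j
      · rw [hmj] at this ⊢; rw [hv'j]; omega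
      · rw [hv'o m hml hmj]; omega
    exact Relation.ReflTransGen.head e1
      (Relation.ReflTransGen.head e2 (ih v' hsv' hv'c hδ'))
end

section
/- Let n ≥ 1, d ≥ 1, A = {a ∈ ℕ^n : |a| = d}, k ≥ 1, i ≥ 2, c ∈ ℕ^n with |c| = k+id. Suppose v, w ∈ A satisfy v ≤ c, w ≤ c, and v = w + e_j - e_l for some indices j ≠ l (an elementary move). Then there exists u ∈ A with u ≤ c such that v + u ≤ c and w + u ≤ c componentwise. -/
lemma aux_pick {ι : Type*} [DecidableEq ι] (s : Finset ι) (m : ι → ℕ) :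
    ∀ d : ℕ, d ≤ ∑ x ∈ s, m x → ∃ u : ι → ℕ, (∀ x, u x ≤ m x) ∧ ∑ x ∈ s, u x = d := by
  induction s using Finset.induction_on with
  | empty =>
    intro d hd
    simp only [Finset.sum_empty, Nat.le_zero] at hd
    exact ⟨fun _ => 0, fun x => Nat.zero_le _, by simp [hd]⟩
  | @insert a s ha ih =>
    intro d hd
    rw [Finset.sum_insert ha] at hd
    obtain ⟨u', hu', hsum⟩ := ih (d - min d (m a)) (by omega)
    refine ⟨fun x => if x = a then min d (m a) else u' x, ?_, ?_⟩
    · intro x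
      by_cases hx : x = a
      · simp [hx]
      · simpa [hx] using hu' x
    · rw [Finset.sum_insert ha, if_pos rfl,
        Finset.sum_congr rfl (fun x hx => if_neg (by rintro rfl; exact ha hx)), hsum]
      omega

theorem stmt9 (n d k i : ℕ) (hn : 1 ≤ n) (hd : 1 ≤ d) (hk : 1 ≤ k) (hi : 2 ≤ i)
    (c : Fin n → ℕ) (hc : ∑ t, c t = k + i * d)
    (v w : Fin n → ℕ) (hv : ∑ t, v t = d) (hw : ∑ t, w t = d)
    (hvc : ∀ t, v t ≤ c t) (hwc : ∀ t, w t ≤ c t)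
    (j l : Fin n) (hjl : j ≠ l)
    (hmove : ∀ t, (v t : ℤ)
      = (w t : ℤ) + (if t = j then 1 else 0) - (if t = l then 1 else 0)) :
    ∃ u : Fin n → ℕ, (∑ t, u t = d) ∧ (∀ t, u t ≤ c t) ∧
      (∀ t, v t + u t ≤ c t) ∧ (∀ t, w t + u t ≤ c t) := by
  -- pointwise description of max v w
  have hmax : ∀ t, max (v t) (w t) = w t + (if t = j then 1 else 0) := by
    intro t
    have := hmove t
    by_cases htj : t = j <;> by_cases htl : t = l
    · exact absurd (htj.symm.trans htl) hjl
    · rw [if_pos htj, if_neg htl] at this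
      rw [if_pos htj]
      omega
    · rw [if_neg htj, if_pos htl] at this
      rw [if_neg htj]
      omega
    · rw [if_neg htj, if_neg htl] at this
      rw [if_neg htj]
      omega
  have hsummax : ∑ t, max (v t) (w t) = d + 1 := by
    calc ∑ t, max (v t) (w t) = ∑ t, (w t + if t = j then 1 else 0) := by
          exact Finset.sum_congr rfl fun t _ => hmax t
      _ = (∑ t, w t) + ∑ t, (if t = j then 1 else 0) := Finset.sum_add_distrib
      _ = d + 1 := by rw [hw, Finset.sum_ite_eq' Finset.univ j (fun _ => 1)]; simp
  have hmaxle : ∀ t, max (v t) (w t) ≤ c t := fun t => max_le (hvc t) (hwc t)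
  have hle : d ≤ ∑ t, (c t - max (v t) (w t)) := by
    have : ∑ t, (c t - max (v t) (w t)) = (∑ t, c t) - ∑ t, max (v t) (w t) :=
      (Finset.sum_tsub_distrib Finset.univ (fun t _ => hmaxle t)).symm ▸ rfl
    rw [Finset.sum_tsub_distrib Finset.univ (fun t _ => hmaxle t), hc, hsummax]
    have : 2 * d ≤ i * d := Nat.mul_le_mul_right d hi
    omega
  obtain ⟨u, hu, hus⟩ := aux_pick Finset.univ (fun t => c t - max (v t) (w t)) d hle
  refine ⟨u, hus, fun t => ?_, fun t => ?_, fun t => ?_⟩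
  · have := hu t; omega
  · have := hu t; have := hmaxle t; have : v t ≤ max (v t) (w t) := le_max_left _ _; omega
  · have := hu t; have := hmaxle t; have : w t ≤ max (v t) (w t) := le_max_right _ _; omega
end

section
/- Let n ≥ 2, d ≥ 1, k ≥ d, A = {a ∈ ℕ^n : |a|=d}, N = C(d+n-1,d), and let s = k+(N-1)d, write s = mn + r with 0 ≤ r < n, and let c = m·(1,...,1) + (1,...,1,0,...,0) with r ones. Then for every subset F ⊆ A with |F| = N−1, ∑_{a∈F} a ≤ c componentwise. -/
lemma coordsum_symm (n d : ℕ) (i j : Fin n) :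
    ∑ a ∈ Finset.Nat.antidiagonalTuple n d, a i
      = ∑ a ∈ Finset.Nat.antidiagonalTuple n d, a j := by
  apply Finset.sum_equiv ((Equiv.swap i j).arrowCongr (Equiv.refl ℕ))
  · intro a
    simp only [Finset.Nat.mem_antidiagonalTuple, Equiv.arrowCongr_apply,
      Equiv.refl_symm, Equiv.coe_refl, Function.comp, Equiv.symm_swap, id_eq]
    constructor
    · intro h; rw [← h]; exact Equiv.sum_comp (Equiv.swap i j) a
    · intro h; rw [← h]; exact (Equiv.sum_comp (Equiv.swap i j) a).symm
  · intro a _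
    simp [Function.comp, Equiv.swap_apply_right]

lemma card_adt_le (n d : ℕ) (hn : 0 < n) :
    (Finset.Nat.antidiagonalTuple n d).card ≤ Nat.multichoose n d := by
  rw [← Sym.card_sym_fin_eq_multichoose]
  classical
  let f : (Fin n → ℕ) → Sym (Fin n) d := fun a =>
    if h : ∑ i, a i = d then
      ⟨∑ i : Fin n, Multiset.replicate (a i) i, by
        rw [Multiset.card_sum]; simpa using h⟩
    else Sym.replicate d ⟨0, hn⟩
  have hcount : ∀ (a : Fin n → ℕ) (j : Fin n),
      Multiset.count j (∑ i : Fin n, Multiset.replicate (a i) i) = a j := by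
    intro a j
    rw [Multiset.count_sum']
    simp [Multiset.count_replicate, Finset.sum_ite_eq]
  rw [← Finset.card_univ]
  apply Finset.card_le_card_of_injOn f (fun _ _ => Finset.mem_univ _)
  intro a ha b hb hab
  rw [Finset.mem_coe, Finset.Nat.mem_antidiagonalTuple] at ha hb
  simp only [f, dif_pos ha, dif_pos hb] at hab
  funext j
  rw [← hcount a j, ← hcount b j]
  simpa [ha, hb] using congrArg (fun s : Sym (Fin n) d => Multiset.count j s.val) hab

lemma arith_aux (n d k N S Tc : ℕ) (hn0 : 0 < n) (hk : d ≤ k) (hN1 : 1 ≤ N)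
    (h2 : n * S = Tc * d) (hTN : Tc ≤ N) : S ≤ (k + (N - 1) * d) / n := by
  rw [Nat.le_div_iff_mul_le hn0, mul_comm]
  have : Tc * d ≤ N * d := Nat.mul_le_mul_right d hTN
  have hNd : N * d = d + (N - 1) * d := by
    cases N with
    | zero => omega
    | succ m => simp [Nat.succ_mul, Nat.add_comm]
  omega

theorem stmt17 (n d k : ℕ) (hn : 2 ≤ n) (hd : 1 ≤ d) (hk : d ≤ k)
    (N : ℕ) (hN : N = (d + n - 1).choose d)
    (c : Fin n → ℕ)
    (hc : ∀ j : Fin n, c j = (k + (N - 1) * d) / n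
      + (if (j : ℕ) < (k + (N - 1) * d) % n then 1 else 0))
    (F : Finset (Fin n → ℕ)) (hF : F ⊆ Finset.Nat.antidiagonalTuple n d)
    (hcard : F.card = N - 1) :
    ∀ j, (∑ a ∈ F, a j) ≤ c j := by
  intro j
  have hn0 : 0 < n := by omega
  set T := Finset.Nat.antidiagonalTuple n d with hT
  have h1 : ∑ a ∈ F, a j ≤ ∑ a ∈ T, a j :=
    Finset.sum_le_sum_of_subset hF
  have h2 : n * (∑ a ∈ T, a j) = T.card * d := by
    have e1 : ∑ j' : Fin n, ∑ a ∈ T, a j' = n * (∑ a ∈ T, a j) := by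
      rw [Finset.sum_congr rfl (fun j' _ => coordsum_symm n d j' j)]
      simp [mul_comm, hT]
    have e2 : ∑ a ∈ T, (∑ x : Fin n, a x) = T.card * d := by
      have hall : ∀ a ∈ T, ∑ x : Fin n, a x = d := fun a ha =>
        Finset.Nat.mem_antidiagonalTuple.mp ha
      rw [Finset.sum_congr rfl hall]
      simp [mul_comm]
    rw [← e1, Finset.sum_comm, e2]
  have hTN : T.card ≤ N := by
    rw [hN, hT]
    have h := card_adt_le n d hn0
    rwa [Nat.multichoose_eq, show n + d - 1 = d + n - 1 from by
      clear h1 h2; omega] at h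
  have hN1 : 1 ≤ N := by
    rw [hN]
    exact Nat.choose_pos (Nat.le_sub_of_add_le (by clear h1 h2; omega))
  have h4 : (∑ a ∈ T, a j) ≤ (k + (N - 1) * d) / n :=
    arith_aux n d k N _ T.card hn0 hk hN1 h2 hTN
  have h5 : (k + (N - 1) * d) / n ≤ c j := by
    rw [hc j]; exact Nat.le_add_right _ _
  exact le_trans h1 (le_trans h4 h5)
end
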